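/- arXiv:2104.11549 — 4 statements merged into one kernel-verified Lean document; each statement's English description precedes it below -/
import Mathlib

section
/- (Craig's representation of the Q-function) For every real number x ≥ 0, Q(x) = (1/π) ∫_0^{π/2} exp(-x²/(2 sin²θ)) dθ. -/
open Real MeasureTheory

/-- The Gaussian Q-function: `Q x = (1/√(2π)) ∫_x^∞ exp(-u²/2) du`. -/
noncomputable def gaussQ (x : ℝ) : ℝ :=
  (Real.sqrt (2 * Real.pi))⁻¹ * ∫ u in Set.Ioi x, Real.exp (-u ^ 2 / 2)

section CraigHelpers
open Set

lemma cot_deriv (y : ℝ) {θ : ℝ} (hθ : θ ∈ Ioo 0 (π/2)) :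
    HasDerivAt (fun t : ℝ => y * Real.cos t / Real.sin t) (-(y / Real.sin θ ^ 2)) θ := by
  have hs : Real.sin θ ≠ 0 :=
    ne_of_gt (Real.sin_pos_of_pos_of_lt_pi hθ.1 (hθ.2.trans (by linarith [pi_pos])))
  have h1 : HasDerivAt (fun t : ℝ => y * Real.cos t) (y * (-Real.sin θ)) θ :=
    (Real.hasDerivAt_cos θ).const_mul y
  have h2 := h1.div (Real.hasDerivAt_sin θ) hs
  refine h2.congr_deriv ?_
  field_simp
  linear_combination (-y) * (Real.sin_sq_add_cos_sq θ)

lemma cot_injOn (y : ℝ) (hy : 0 < y) :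
    InjOn (fun t : ℝ => y * Real.cos t / Real.sin t) (Ioo 0 (π/2)) := by
  intro a ha b hb hab
  have key : ∀ c ∈ Ioo 0 (π/2), Real.arctan (y / (y * Real.cos c / Real.sin c)) = c := by
    intro c hc
    have hsc : 0 < Real.sin c := Real.sin_pos_of_pos_of_lt_pi hc.1 (hc.2.trans (by linarith [pi_pos]))
    have hcc : 0 < Real.cos c := Real.cos_pos_of_mem_Ioo ⟨by linarith [hc.1, pi_pos], hc.2⟩
    have : y / (y * Real.cos c / Real.sin c) = Real.tan c := by
      rw [Real.tan_eq_sin_div_cos]; field_simp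
    rw [this]
    exact Real.arctan_tan (by linarith [hc.1, pi_pos]) hc.2
  have hab' : y * Real.cos a / Real.sin a = y * Real.cos b / Real.sin b := hab
  calc a = Real.arctan (y / (y * Real.cos a / Real.sin a)) := (key a ha).symm
    _ = Real.arctan (y / (y * Real.cos b / Real.sin b)) := by rw [hab']
    _ = b := key b hb

lemma cot_image (y : ℝ) (hy : 0 < y) :
    (fun t : ℝ => y * Real.cos t / Real.sin t) '' (Ioo 0 (π/2)) = Ioi 0 := by
  ext t
  simp only [mem_image, mem_Ioi]
  constructor
  · rintro ⟨θ, hθ, rfl⟩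
    have hsc : 0 < Real.sin θ := Real.sin_pos_of_pos_of_lt_pi hθ.1 (hθ.2.trans (by linarith [pi_pos]))
    have hcc : 0 < Real.cos θ := Real.cos_pos_of_mem_Ioo ⟨by linarith [hθ.1, pi_pos], hθ.2⟩
    positivity
  · intro ht
    refine ⟨Real.arctan (y / t), ⟨by rw [← Real.arctan_zero]; exact Real.arctan_strictMono (by positivity), Real.arctan_lt_pi_div_two _⟩, ?_⟩
    have h1 : Real.tan (Real.arctan (y / t)) = y / t := Real.tan_arctan _
    have hcc : 0 < Real.cos (Real.arctan (y / t)) := Real.cos_arctan_pos _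
    rw [Real.tan_eq_sin_div_cos] at h1
    have hsin : Real.sin (Real.arctan (y / t)) = y / t * Real.cos (Real.arctan (y / t)) := by
      field_simp at h1 ⊢; linarith [h1]
    rw [hsin]
    field_simp

lemma gauss_int : Integrable (fun t : ℝ => Real.exp (-t^2/2)) := by
  have h := integrable_exp_neg_mul_sq (by norm_num : (0:ℝ) < 1/2)
  convert h using 2 with t
  ring_nf

lemma gauss_int_Ioi : ∫ t in Ioi (0:ℝ), Real.exp (-t^2/2) = Real.sqrt (2*π) / 2 := by
  have h := integral_gaussian_Ioi (1/2)
  rw [show π / (1/2 : ℝ) = 2 * π by ring] at h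
  rw [← h]
  apply setIntegral_congr_fun measurableSet_Ioi
  intro t _
  ring_nf

lemma abs_smul_eq (y : ℝ) (hy : 0 < y) {θ : ℝ} (hθ : θ ∈ Ioo 0 (π/2)) :
    |(-(y / Real.sin θ ^ 2))| • Real.exp (-(y^2 + (y * Real.cos θ / Real.sin θ)^2)/2)
      = y / Real.sin θ ^ 2 * Real.exp (-y^2 / (2 * Real.sin θ ^ 2)) := by
  have hsc : 0 < Real.sin θ := Real.sin_pos_of_pos_of_lt_pi hθ.1 (hθ.2.trans (by linarith [pi_pos]))
  rw [abs_neg, abs_of_nonneg (by positivity), smul_eq_mul]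
  congr 1
  congr 1
  field_simp
  linear_combination (-1) * (Real.sin_sq_add_cos_sq θ)

lemma inner_integrable (y : ℝ) (hy : 0 < y) :
    IntegrableOn (fun θ => y / Real.sin θ ^ 2 * Real.exp (-y^2 / (2 * Real.sin θ ^ 2)))
      (Ioo 0 (π/2)) := by
  have hint : IntegrableOn (fun t : ℝ => Real.exp (-(y^2 + t^2)/2)) (Ioi 0) := by
    apply Integrable.integrableOn
    have : (fun t : ℝ => Real.exp (-(y^2 + t^2)/2))
        = fun t : ℝ => Real.exp (-y^2/2) * Real.exp (-t^2/2) := by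
      funext t; rw [← Real.exp_add]; ring_nf
    rw [this]
    exact gauss_int.const_mul _
  rw [← cot_image y hy] at hint
  rw [integrableOn_image_iff_integrableOn_abs_deriv_smul measurableSet_Ioo
    (fun θ hθ => (cot_deriv y hθ).hasDerivWithinAt) (cot_injOn y hy)] at hint
  exact hint.congr_fun (fun θ hθ => abs_smul_eq y hy hθ) measurableSet_Ioo

lemma inner_integral (y : ℝ) (hy : 0 < y) :
    ∫ θ in Ioo 0 (π/2), y / Real.sin θ ^ 2 * Real.exp (-y^2 / (2 * Real.sin θ ^ 2))
      = Real.exp (-y^2/2) * (Real.sqrt (2*π) / 2) := by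
  have h := integral_image_eq_integral_abs_deriv_smul measurableSet_Ioo
    (fun θ hθ => (cot_deriv y hθ).hasDerivWithinAt) (cot_injOn y hy)
    (fun t => Real.exp (-(y^2 + t^2)/2))
  rw [cot_image y hy] at h
  have hL : ∫ t in Ioi (0:ℝ), Real.exp (-(y^2 + t^2)/2)
      = Real.exp (-y^2/2) * (Real.sqrt (2*π) / 2) := by
    have : ∀ t : ℝ, Real.exp (-(y^2 + t^2)/2) = Real.exp (-y^2/2) * Real.exp (-t^2/2) := by
      intro t; rw [← Real.exp_add]; ring_nf
    simp_rw [this]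
    rw [integral_const_mul, gauss_int_Ioi]
  rw [hL] at h
  rw [h]
  apply setIntegral_congr_fun measurableSet_Ioo
  intro θ hθ
  exact (abs_smul_eq y hy hθ).symm

lemma ftc (x : ℝ) {θ : ℝ} (hs : Real.sin θ ≠ 0) :
    ∫ y in (0:ℝ)..x, y / Real.sin θ ^ 2 * Real.exp (-y^2 / (2 * Real.sin θ ^ 2))
      = 1 - Real.exp (-x^2 / (2 * Real.sin θ ^ 2)) := by
  set c := Real.sin θ ^ 2 with hc
  have hc0 : c ≠ 0 := pow_ne_zero 2 hs
  have hderiv : ∀ y : ℝ, HasDerivAt (fun y : ℝ => -Real.exp (-y^2 / (2*c)))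
      (y / c * Real.exp (-y^2 / (2*c))) y := by
    intro y
    have h1 : HasDerivAt (fun y : ℝ => -y^2 / (2*c)) (-(2*y^1) / (2*c)) y := by
      simpa using ((hasDerivAt_pow 2 y).neg.div_const (2*c))
    have h2 := (h1.exp).neg
    refine h2.congr_deriv ?_
    field_simp
  have hcont : Continuous (fun y : ℝ => y / c * Real.exp (-y^2 / (2*c))) := by
    exact (continuous_id.div_const c).mul
      (Real.continuous_exp.comp ((continuous_pow 2).neg.div_const (2*c)))
  rw [intervalIntegral.integral_eq_sub_of_hasDerivAt (fun y _ => hderiv y)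
    (hcont.intervalIntegrable 0 x)]
  simp [Real.exp_zero]
  ring

lemma sin_ne_zero_Ioc {θ : ℝ} (hθ : θ ∈ Ioc 0 (π/2)) : Real.sin θ ≠ 0 :=
  ne_of_gt (Real.sin_pos_of_pos_of_lt_pi hθ.1 (lt_of_le_of_lt hθ.2 (by linarith [pi_pos])))

lemma prod_int (x : ℝ) (hx : 0 ≤ x) :
    Integrable (Function.uncurry fun θ y =>
        y / Real.sin θ ^ 2 * Real.exp (-y^2 / (2 * Real.sin θ ^ 2)))
      ((volume.restrict (Ioc 0 (π/2))).prod (volume.restrict (Ioc 0 x))) := by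
  haveI : IsFiniteMeasure (volume.restrict (Ioc (0:ℝ) (π/2))) :=
    ⟨by rw [Measure.restrict_apply_univ]; exact measure_Ioc_lt_top⟩
  have hmeas : AEStronglyMeasurable (Function.uncurry fun θ y =>
      y / Real.sin θ ^ 2 * Real.exp (-y^2 / (2 * Real.sin θ ^ 2)))
      ((volume.restrict (Ioc 0 (π/2))).prod (volume.restrict (Ioc 0 x))) := by
    apply Measurable.aestronglyMeasurable
    apply Measurable.mul
    · exact measurable_snd.div ((Real.measurable_sin.comp measurable_fst).pow_const 2)
    · exact Real.measurable_exp.comp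
        ((measurable_snd.pow_const 2).neg.div
          (((Real.measurable_sin.comp measurable_fst).pow_const 2).const_mul 2))
  rw [integrable_prod_iff hmeas]
  constructor
  · filter_upwards [ae_restrict_mem measurableSet_Ioc] with θ hθ
    simp only [Function.uncurry_apply_pair]
    have hcont : Continuous (fun y : ℝ =>
        y / Real.sin θ ^ 2 * Real.exp (-y^2 / (2 * Real.sin θ ^ 2))) :=
      (continuous_id.div_const _).mul
        (Real.continuous_exp.comp ((continuous_pow 2).neg.div_const _))
    exact hcont.integrableOn_Ioc
  · refine ⟨(hmeas.norm).integral_prod_right', ?_⟩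
    apply HasFiniteIntegral.of_bounded (C := 1)
    filter_upwards [ae_restrict_mem measurableSet_Ioc] with θ hθ
    have hs := sin_ne_zero_Ioc hθ
    have hval : ∫ y in Ioc 0 x, ‖y / Real.sin θ ^ 2 * Real.exp (-y^2 / (2 * Real.sin θ ^ 2))‖
        = 1 - Real.exp (-x^2 / (2 * Real.sin θ ^ 2)) := by
      rw [setIntegral_congr_fun measurableSet_Ioc (g := fun y =>
          y / Real.sin θ ^ 2 * Real.exp (-y^2 / (2 * Real.sin θ ^ 2)))
        (fun y hy => norm_of_nonneg (mul_nonneg (div_nonneg hy.1.le (sq_nonneg _))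
          (Real.exp_pos _).le))]
      rw [← intervalIntegral.integral_of_le hx]
      exact ftc x hs
    simp only [Function.uncurry] at hval ⊢
    rw [hval, Real.norm_eq_abs, abs_le]
    have h1 : Real.exp (-x^2 / (2 * Real.sin θ ^ 2)) ≤ 1 := by
      rw [Real.exp_le_one_iff]
      apply div_nonpos_of_nonpos_of_nonneg (neg_nonpos.mpr (by positivity))
      positivity
    have h2 := Real.exp_pos (-x^2 / (2 * Real.sin θ ^ 2))
    constructor <;> linarith

lemma key_eq (x : ℝ) (hx : 0 ≤ x) :
    ∫ θ in Ioc 0 (π/2), Real.exp (-x^2 / (2 * Real.sin θ ^ 2))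
      = π/2 - (Real.sqrt (2*π)/2) * ∫ y in (0:ℝ)..x, Real.exp (-y^2/2) := by
  haveI : IsFiniteMeasure (volume.restrict (Ioc (0:ℝ) (π/2))) :=
    ⟨by rw [Measure.restrict_apply_univ]; exact measure_Ioc_lt_top⟩
  have hfub := integral_integral_swap (prod_int x hx)
  have hL : (∫ θ in Ioc 0 (π/2), ∫ y in Ioc 0 x,
        y / Real.sin θ ^ 2 * Real.exp (-y^2 / (2 * Real.sin θ ^ 2)))
      = ∫ θ in Ioc 0 (π/2), (1 - Real.exp (-x^2 / (2 * Real.sin θ ^ 2))) := by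
    apply setIntegral_congr_fun measurableSet_Ioc
    intro θ hθ
    simp only
    rw [← intervalIntegral.integral_of_le hx]
    exact ftc x (sin_ne_zero_Ioc hθ)
  have hR : (∫ y in Ioc 0 x, ∫ θ in Ioc 0 (π/2),
        y / Real.sin θ ^ 2 * Real.exp (-y^2 / (2 * Real.sin θ ^ 2)))
      = ∫ y in Ioc 0 x, Real.exp (-y^2/2) * (Real.sqrt (2*π) / 2) := by
    apply setIntegral_congr_fun measurableSet_Ioc
    intro y hy
    simp only
    rw [← Measure.restrict_congr_set Ioo_ae_eq_Ioc]
    exact inner_integral y hy.1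
  rw [hL, hR] at hfub
  have hg : Integrable (fun θ => Real.exp (-x^2 / (2 * Real.sin θ ^ 2)))
      (volume.restrict (Ioc 0 (π/2))) := by
    refine ⟨(Real.measurable_exp.comp (measurable_const.div
      ((Real.measurable_sin.pow_const 2).const_mul 2))).aestronglyMeasurable, ?_⟩
    apply HasFiniteIntegral.of_bounded (C := 1)
    filter_upwards with θ
    rw [Real.norm_eq_abs, abs_of_pos (Real.exp_pos _)]
    rw [Real.exp_le_one_iff]
    apply div_nonpos_of_nonpos_of_nonneg (neg_nonpos.mpr (by positivity))
    positivity
  rw [integral_sub (integrable_const 1) hg] at hfub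
  rw [setIntegral_const, Real.volume_real_Ioc_of_le (by linarith [pi_pos]), smul_eq_mul, mul_one] at hfub
  rw [integral_mul_const, ← intervalIntegral.integral_of_le hx] at hfub
  linarith [hfub]

theorem gaussQ_craig' (x : ℝ) (hx : 0 ≤ x) :
    (Real.sqrt (2 * Real.pi))⁻¹ * ∫ u in Set.Ioi x, Real.exp (-u ^ 2 / 2) =
      (1 / Real.pi) * ∫ θ in (0 : ℝ)..(Real.pi / 2),
        Real.exp (-x ^ 2 / (2 * Real.sin θ ^ 2)) := by
  have hIoi : ∫ u in Ioi x, Real.exp (-u ^ 2 / 2)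
      = Real.sqrt (2*π)/2 - ∫ y in (0:ℝ)..x, Real.exp (-y^2/2) := by
    have h1 := setIntegral_union (f := fun u : ℝ => Real.exp (-u ^ 2 / 2)) (μ := volume) (s := Ioc 0 x) (t := Ioi x)
      (Set.Ioc_disjoint_Ioi le_rfl) measurableSet_Ioi
      gauss_int.integrableOn gauss_int.integrableOn
    rw [Ioc_union_Ioi_eq_Ioi hx, gauss_int_Ioi] at h1
    rw [intervalIntegral.integral_of_le hx]
    linarith [h1]
  rw [hIoi, intervalIntegral.integral_of_le (by linarith [pi_pos] : (0:ℝ) ≤ π/2), key_eq x hx]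
  set J := ∫ y in (0:ℝ)..x, Real.exp (-y^2/2) with hJ
  have hs2 : Real.sqrt (2*π) ^ 2 = 2*π := Real.sq_sqrt (by positivity)
  have hs0 : Real.sqrt (2*π) ≠ 0 := by positivity
  have hπ : (π : ℝ) ≠ 0 := Real.pi_ne_zero
  have h2 : Real.sqrt 2 ^ 2 = 2 := Real.sq_sqrt (by norm_num)
  have hp : Real.sqrt π ^ 2 = π := Real.sq_sqrt Real.pi_pos.le
  field_simp
  linear_combination J * hs2

end CraigHelpers

/-- Craig's representation of the Q-function. -/
theorem gaussQ_craig (x : ℝ) (hx : 0 ≤ x) :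
    gaussQ x =
      (1 / Real.pi) * ∫ θ in (0 : ℝ)..(Real.pi / 2),
        Real.exp (-x ^ 2 / (2 * Real.sin θ ^ 2)) := by
  unfold gaussQ
  exact gaussQ_craig' x hx
end

section
/- For every real ρ > 0 and every integer m ≥ 1, ∫_0^{π/2} (1 + ρ/sin²θ)^{-m} dθ ≥ (√π / (2√(m + 1/2))) · (1 + ρ)^{-m}, where the integrand is extended by the value 0 at θ = 0. -/
open Real MeasureTheory

open Finset

lemma wallis_prod_inv (k : ℕ) :
    Real.Wallis.W k * ((∏ i ∈ range k, ((2*(i:ℝ)+1)/(2*i+2)))^2 * (2*k+1)) = 1 := by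
  induction k with
  | zero => simp [Real.Wallis.W]
  | succ k ih =>
    rw [Real.Wallis.W_succ, Finset.prod_range_succ]
    have h1 : (2*(k:ℝ)+1) ≠ 0 := by positivity
    have h2 : (2*(k:ℝ)+2) ≠ 0 := by positivity
    have h3 : (2*(k:ℝ)+3) ≠ 0 := by positivity
    push_cast
    field_simp at ih ⊢
    linear_combination (2*(k:ℝ)+3)*ih

lemma sin_pow_half_integral (m : ℕ) :
    ∫ x in (0:ℝ)..(π/2), sin x ^ (2*m)
      = π/2 * ∏ i ∈ range m, ((2*(i:ℝ)+1)/(2*i+2)) := by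
  have hc : Continuous fun x : ℝ => sin x ^ (2*m) := by continuity
  have h2 : ∫ x in (π/2:ℝ)..π, sin x ^ (2*m) = ∫ x in (0:ℝ)..(π/2), sin x ^ (2*m) := by
    have := intervalIntegral.integral_comp_sub_left (a := (0:ℝ)) (b := π/2)
      (fun x => sin x ^ (2*m)) π
    rw [show π - π/2 = π/2 by ring, sub_zero] at this
    rw [← this]
    simp [Real.sin_pi_sub]
  have h1 : (∫ x in (0:ℝ)..(π/2), sin x ^ (2*m)) + ∫ x in (π/2:ℝ)..π, sin x ^ (2*m)
      = ∫ x in (0:ℝ)..π, sin x ^ (2*m) :=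
    intervalIntegral.integral_add_adjacent_intervals (hc.intervalIntegrable _ _) (hc.intervalIntegrable _ _)
  have := integral_sin_pow_even (n := m)
  rw [← h1, h2] at this
  linarith

lemma prod_lower_bound (m : ℕ) :
    Real.sqrt Real.pi / (2 * Real.sqrt ((m : ℝ) + 1 / 2))
      ≤ π/2 * ∏ i ∈ range m, ((2*(i:ℝ)+1)/(2*i+2)) := by
  set P : ℝ := ∏ i ∈ range m, ((2*(i:ℝ)+1)/(2*i+2)) with hP
  have hP0 : 0 ≤ P := Finset.prod_nonneg fun i _ => by positivity
  have hW := Real.Wallis.W_le m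
  have hWpos := Real.Wallis.W_pos m
  have hid := wallis_prod_inv m
  have hm2 : (0:ℝ) < 2*(m:ℝ)+1 := by positivity
  have hPsq : 2/π ≤ P^2 * (2*(m:ℝ)+1) := by
    have h1 : P^2 * (2*(m:ℝ)+1) = (Real.Wallis.W m)⁻¹ := by
      field_simp
      linarith [hid]
    rw [h1, ← inv_div]
    exact inv_anti₀ hWpos hW
  -- LHS = sqrt (π / (4*(m+1/2)))
  have hms : (0:ℝ) < (m:ℝ) + 1/2 := by positivity
  have e1 : Real.sqrt Real.pi / (2 * Real.sqrt ((m : ℝ) + 1 / 2))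
      = Real.sqrt (π / (4 * ((m:ℝ) + 1/2))) := by
    rw [Real.sqrt_div pi_pos.le, Real.sqrt_mul (by norm_num : (0:ℝ) ≤ 4),
      show Real.sqrt 4 = 2 by rw [show (4:ℝ) = 2^2 by norm_num, Real.sqrt_sq (by norm_num : (0:ℝ) ≤ 2)]]
  rw [e1, show π/2 * P = Real.sqrt ((π/2*P)^2) from (Real.sqrt_sq (by positivity)).symm]
  apply Real.sqrt_le_sqrt
  rw [div_le_iff₀ (by positivity)]
  rw [div_le_iff₀ pi_pos] at hPsq
  nlinarith [mul_le_mul_of_nonneg_left hPsq pi_pos.le, pi_pos, sq_nonneg P]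

/-- For `ρ > 0` and `m ≥ 1`:
`∫_0^{π/2} (1 + ρ/sin²θ)^{-m} dθ ≥ (√π / (2√(m + 1/2))) (1 + ρ)^{-m}`,
where the integrand is extended by the value `0` at `θ = 0`. -/
theorem integral_lower_bound (ρ : ℝ) (hρ : 0 < ρ) (m : ℕ) (hm : 1 ≤ m) :
    (∫ θ in Set.Icc (0 : ℝ) (Real.pi / 2),
        if θ = 0 then 0 else ((1 + ρ / Real.sin θ ^ 2) ^ m)⁻¹) ≥
      Real.sqrt Real.pi / (2 * Real.sqrt ((m : ℝ) + 1 / 2)) * ((1 + ρ) ^ m)⁻¹ := by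
  set c : ℝ := ((1 + ρ) ^ m)⁻¹ with hc
  have hcpos : 0 < c := by positivity
  set f : ℝ → ℝ := fun θ => if θ = 0 then 0 else ((1 + ρ / Real.sin θ ^ 2) ^ m)⁻¹ with hf
  set g : ℝ → ℝ := fun θ => c * Real.sin θ ^ (2*m) with hg
  have hmeas : Measurable f := by
    refine Measurable.ite ?_ measurable_const
      (((measurable_const.add ((Real.measurable_sin.pow_const 2).const_div ρ)).pow_const m).inv)
    simpa using measurableSet_singleton (0:ℝ)
  have hbound : ∀ θ, ‖f θ‖ ≤ 1 := by
    intro θ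
    simp only [hf]
    split_ifs with h0
    · simp
    · rw [Real.norm_eq_abs, abs_of_nonneg (by positivity)]
      have hb : (1:ℝ) ≤ 1 + ρ / Real.sin θ ^ 2 := by
        nlinarith [div_nonneg hρ.le (sq_nonneg (Real.sin θ))]
      have : (1:ℝ) ≤ (1 + ρ / Real.sin θ ^ 2)^m := by
        calc (1:ℝ) = 1^m := (one_pow m).symm
        _ ≤ _ := pow_le_pow_left₀ zero_le_one hb m
      exact inv_le_one_of_one_le₀ this
  have hf_int : IntegrableOn f (Set.Icc (0:ℝ) (π/2)) := by
    apply Integrable.mono' ((integrableOn_const_iff (C := (1:ℝ))).mpr (Or.inr measure_Icc_lt_top))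
        hmeas.aestronglyMeasurable
    exact ae_of_all _ hbound
  have hg_int : IntegrableOn g (Set.Icc (0:ℝ) (π/2)) := by
    apply Continuous.integrableOn_Icc
    continuity
  have hmono : ∀ θ ∈ Set.Icc (0:ℝ) (π/2), g θ ≤ f θ := by
    intro θ hθ
    by_cases h0 : θ = 0
    · subst h0
      simp [hg, hf, zero_pow (by omega : 2*m ≠ 0)]
    · have hθpos : 0 < θ := lt_of_le_of_ne hθ.1 (Ne.symm h0)
      have hs : 0 < Real.sin θ :=
        Real.sin_pos_of_pos_of_lt_pi hθpos (lt_of_le_of_lt hθ.2 (by linarith [pi_pos]))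
      have hs2 : 0 < Real.sin θ ^ 2 := by positivity
      have hs1 : Real.sin θ ^ 2 ≤ 1 := by
        nlinarith [Real.sin_le_one θ]
      have hbase : 1 + ρ / Real.sin θ ^ 2 ≤ (1+ρ) / Real.sin θ ^ 2 := by
        rw [le_div_iff₀ hs2, add_mul, div_mul_cancel₀ _ (ne_of_gt hs2)]
        linarith
      have hpow : (1 + ρ / Real.sin θ ^ 2)^m ≤ (1+ρ)^m / Real.sin θ ^ (2*m) := by
        calc (1 + ρ / Real.sin θ ^ 2)^m ≤ ((1+ρ) / Real.sin θ ^ 2)^m :=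
              pow_le_pow_left₀ (by positivity) hbase m
        _ = (1+ρ)^m / Real.sin θ ^ (2*m) := by rw [div_pow, ← pow_mul]
      have hfθ : f θ = ((1 + ρ / Real.sin θ ^ 2)^m)⁻¹ := by simp [hf, h0]
      have hinv : ((1+ρ)^m / Real.sin θ ^ (2*m))⁻¹ ≤ ((1 + ρ / Real.sin θ ^ 2)^m)⁻¹ :=
        inv_anti₀ (by positivity) hpow
      rw [hfθ]
      refine le_trans (le_of_eq ?_) hinv
      rw [inv_div]
      simp [hg, hc, div_eq_mul_inv, mul_comm]
  have step1 : ∫ θ in Set.Icc (0:ℝ) (π/2), g θ ≤ ∫ θ in Set.Icc (0:ℝ) (π/2), f θ :=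
    setIntegral_mono_on hg_int hf_int measurableSet_Icc hmono
  have step2 : ∫ θ in Set.Icc (0:ℝ) (π/2), g θ
      = c * (π/2 * ∏ i ∈ range m, ((2*(i:ℝ)+1)/(2*i+2))) := by
    rw [show (∫ θ in Set.Icc (0:ℝ) (π/2), g θ) = c * ∫ θ in Set.Icc (0:ℝ) (π/2), Real.sin θ ^ (2*m) from integral_const_mul c _]
    congr 1
    rw [MeasureTheory.integral_Icc_eq_integral_Ioc,
      ← intervalIntegral.integral_of_le (by positivity : (0:ℝ) ≤ π/2)]
    exact sin_pow_half_integral m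
  rw [ge_iff_le, mul_comm]
  calc c * (Real.sqrt Real.pi / (2 * Real.sqrt ((m : ℝ) + 1 / 2)))
      ≤ c * (π/2 * ∏ i ∈ range m, ((2*(i:ℝ)+1)/(2*i+2))) :=
        mul_le_mul_of_nonneg_left (prod_lower_bound m) hcpos.le
  _ = ∫ θ in Set.Icc (0:ℝ) (π/2), g θ := step2.symm
  _ ≤ _ := step1
end

section
/- Let μ be the standard Gaussian measure on ℝ^N (the product of N copies of the real Gaussian distribution with mean 0 and variance 1). Then for every real a > 0, ∫ Q(a‖g‖) dμ(g) = (1/π) ∫_0^{π/2} (1 + a²/sin²θ)^{-N/2} dθ. -/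
open Real MeasureTheory ProbabilityTheory

open Set in
lemma gauss_deriv (r : ℝ) :
    HasDerivAt (fun r : ℝ => -rexp (-r ^ 2 / 2)) (r * rexp (-r ^ 2 / 2)) r := by
  have h1 : HasDerivAt (fun r : ℝ => -r ^ 2 / 2) (-r) r := by
    have := ((hasDerivAt_pow 2 r).neg.div_const 2)
    refine this.congr_deriv ?_
    ring
  have := (h1.exp).neg
  refine this.congr_deriv ?_
  ring

lemma gauss_tendsto : Filter.Tendsto (fun r : ℝ => -rexp (-r ^ 2 / 2))
    Filter.atTop (nhds 0) := by
  rw [show (0:ℝ) = -0 by ring]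
  apply Filter.Tendsto.neg
  apply Real.tendsto_exp_atBot.comp
  have h2 : Filter.Tendsto (fun r : ℝ => r ^ 2 * (-1/2)) Filter.atTop Filter.atBot :=
    (Filter.tendsto_pow_atTop two_ne_zero).atTop_mul_const_of_neg (by norm_num)
  convert h2 using 2 with r
  ring

lemma rexp_Ioi (c : ℝ) (hc : 0 ≤ c) :
    ∫ r in Set.Ioi c, r * rexp (-r ^ 2 / 2) = rexp (-c ^ 2 / 2) := by
  have := integral_Ioi_of_hasDerivAt_of_nonneg' (g := fun r : ℝ => -rexp (-r ^ 2 / 2))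
    (g' := fun r => r * rexp (-r ^ 2 / 2)) (a := c) (l := 0) (fun x _ => gauss_deriv x)
    (fun x hx => mul_nonneg (le_of_lt (lt_of_le_of_lt hc hx)) (exp_nonneg _)) gauss_tendsto
  rw [this]; ring

lemma rexp_Ioi_int : IntegrableOn (fun r : ℝ => r * rexp (-r ^ 2 / 2)) (Set.Ioi 0) :=
  integrableOn_Ioi_deriv_of_nonneg' (fun x _ => gauss_deriv x)
    (fun x hx => mul_nonneg (le_of_lt hx) (exp_nonneg _)) gauss_tendsto

lemma exp_arg_nonpos_le_one (t : ℝ) (h : t ≤ 0) : rexp t ≤ 1 := by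
  calc rexp t ≤ rexp 0 := Real.exp_le_exp.2 h
  _ = 1 := Real.exp_zero

open Set in
lemma craig {x : ℝ} (hx : 0 < x) :
    gaussQ x = (1/π) * ∫ θ in Set.Ioc 0 (π/2), rexp (-(x / Real.sin θ) ^ 2 / 2) := by
  classical
  set F : ℝ × ℝ → ℝ := fun p =>
    (Set.Ioi x).indicator (fun u => rexp (-u ^ 2 / 2)) p.1 * rexp (-p.2 ^ 2 / 2) with hF
  set G : ℝ × ℝ → ℝ := fun p =>
    if x < p.1 * Real.cos p.2 then p.1 * rexp (-p.1 ^ 2 / 2) else 0 with hG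
  set J : ℝ := ∫ u in Set.Ioi x, rexp (-u ^ 2 / 2) with hJ
  set E : ℝ → ℝ := fun θ => rexp (-(x / Real.cos θ) ^ 2 / 2) with hE
  -- step A
  have hsqrt : ∫ v : ℝ, rexp (-v ^ 2 / 2) = √(2 * π) := by
    have : (fun v : ℝ => rexp (-v ^ 2 / 2)) = fun v : ℝ => rexp (-(1/2 : ℝ) * v ^ 2) := by
      funext v; congr 1; ring
    rw [this, integral_gaussian, show π / (1/2:ℝ) = 2 * π from by ring]
  have stepA : ∫ p : ℝ × ℝ, F p = J * √(2 * π) := by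
    have h := MeasureTheory.integral_prod_mul (μ := (volume : Measure ℝ))
      (ν := (volume : Measure ℝ))
      (f := fun u : ℝ => (Set.Ioi x).indicator (fun u => rexp (-u ^ 2 / 2)) u)
      (g := fun v : ℝ => rexp (-v ^ 2 / 2))
    calc ∫ p : ℝ × ℝ, F p
        = (∫ u, (Set.Ioi x).indicator (fun u => rexp (-u ^ 2 / 2)) u) * ∫ v, rexp (-v ^ 2 / 2) := by
          rw [Measure.volume_eq_prod]; exact h
      _ = J * √(2 * π) := by
          rw [integral_indicator measurableSet_Ioi, hsqrt]
  -- step C : pointwise polar integrand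
  have stepC : ∀ p : ℝ × ℝ, p.1 • F (polarCoord.symm p) = G p := by
    rintro ⟨r, θ⟩
    have hsymm : polarCoord.symm (r, θ) = (r * Real.cos θ, r * Real.sin θ) := rfl
    rw [hsymm, hF, hG]
    simp only [smul_eq_mul]
    by_cases h : x < r * Real.cos θ
    · rw [Set.indicator_of_mem (Set.mem_Ioi.2 h), if_pos h, ← Real.exp_add]
      congr 2
      linear_combination (-(r^2)/2) * (Real.sin_sq_add_cos_sq θ)
    · rw [Set.indicator_of_notMem (by exact h : r * Real.cos θ ∉ Set.Ioi x), if_neg h]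
      ring
  -- integrability of swapped G
  have hGsMeas : Measurable (fun q : ℝ × ℝ => G (q.2, q.1)) := by
    apply Measurable.ite
    · exact measurableSet_lt measurable_const
        (measurable_snd.mul (Real.continuous_cos.measurable.comp measurable_fst))
    · exact measurable_snd.mul
        (((measurable_snd.pow_const 2).neg.div_const 2).exp)
    · exact measurable_const
  have hM : Integrable (fun q : ℝ × ℝ => (1:ℝ) * (|q.2| * rexp (-q.2 ^ 2 / 2)))
      ((volume.restrict (Set.Ioo (-π) π)).prod (volume.restrict (Set.Ioi 0))) := by
    have h1 : Integrable (fun _ : ℝ => (1:ℝ)) (volume.restrict (Set.Ioo (-π) π)) :=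
      integrableOn_const measure_Ioo_lt_top.ne
    have h2 : Integrable (fun r : ℝ => |r| * rexp (-r ^ 2 / 2))
        (volume.restrict (Set.Ioi 0)) := by
      apply rexp_Ioi_int.congr
      filter_upwards [ae_restrict_mem measurableSet_Ioi] with r hr
      rw [abs_of_pos hr]
    exact Integrable.mul_prod (L := ℝ) h1 h2
  have hGs : Integrable (fun q : ℝ × ℝ => G (q.2, q.1))
      ((volume.restrict (Set.Ioo (-π) π)).prod (volume.restrict (Set.Ioi 0))) := by
    apply Integrable.mono' hM hGsMeas.aestronglyMeasurable
    apply Filter.Eventually.of_forall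
    rintro ⟨θ, r⟩
    simp only [hG, one_mul]
    by_cases h : x < r * Real.cos θ
    · rw [if_pos h, norm_mul, Real.norm_eq_abs, Real.norm_eq_abs, Real.abs_exp]
    · rw [if_neg h, norm_zero]
      positivity
  -- step D : polar target integral as iterated integral
  have hrestr : (volume : Measure (ℝ × ℝ)).restrict (Set.Ioi 0 ×ˢ Set.Ioo (-π) π)
      = (volume.restrict (Set.Ioi 0)).prod (volume.restrict (Set.Ioo (-π) π)) := by
    rw [Measure.volume_eq_prod, Measure.prod_restrict]
  have stepD : (∫ p in polarCoord.target, G p)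
      = ∫ θ in Set.Ioo (-π) π, ∫ r in Set.Ioi 0, G (r, θ) := by
    have htarget : polarCoord.target = Set.Ioi (0:ℝ) ×ˢ Set.Ioo (-π) π := rfl
    rw [htarget]
    rw [show (∫ p in Set.Ioi (0:ℝ) ×ˢ Set.Ioo (-π) π, G p)
        = ∫ p, G p ∂((volume.restrict (Set.Ioi 0)).prod (volume.restrict (Set.Ioo (-π) π)))
      from by rw [← hrestr]]
    rw [← MeasureTheory.integral_prod_swap G]
    exact MeasureTheory.integral_prod _ hGs
  -- step E : inner integral
  have stepE : ∀ θ : ℝ, (∫ r in Set.Ioi (0:ℝ), G (r, θ))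
      = if 0 < Real.cos θ then E θ else 0 := by
    intro θ
    by_cases hcos : 0 < Real.cos θ
    · have hc' : 0 < x / Real.cos θ := div_pos hx hcos
      have hpt : ∀ r : ℝ, G (r, θ)
          = (Set.Ioi (x / Real.cos θ)).indicator (fun r => r * rexp (-r ^ 2 / 2)) r := by
        intro r
        rw [Set.indicator_apply, hG]
        simp only [Set.mem_Ioi, div_lt_iff₀ hcos]
      simp_rw [hpt]
      rw [MeasureTheory.setIntegral_indicator measurableSet_Ioi,
        Set.Ioi_inter_Ioi, max_eq_right hc'.le, rexp_Ioi _ hc'.le, if_pos hcos, hE]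
    · rw [if_neg hcos]
      rw [MeasureTheory.setIntegral_congr_fun measurableSet_Ioi
        (g := fun _ => (0:ℝ)) ?_, integral_zero]
      intro r hr
      rw [hG]
      simp only
      rw [if_neg]
      push_neg at hcos ⊢
      calc r * Real.cos θ ≤ 0 := mul_nonpos_of_nonneg_of_nonpos (le_of_lt hr) hcos
      _ ≤ x := hx.le
  -- step F : outer integral
  have hEmeas : Measurable E := by
    apply Real.measurable_exp.comp
    exact (((measurable_const.div Real.continuous_cos.measurable).pow_const 2).neg.div_const 2)
  have hEint : ∀ a b : ℝ, IntervalIntegrable E volume a b := by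
    intro a b
    rw [intervalIntegrable_iff]
    apply Integrable.mono' (integrableOn_const (C := (1:ℝ)) measure_Ioc_lt_top.ne)
      hEmeas.aestronglyMeasurable.restrict
    apply Filter.Eventually.of_forall
    intro θ
    rw [Real.norm_eq_abs, Real.abs_exp]
    apply exp_arg_nonpos_le_one
    have : (0:ℝ) ≤ (x / Real.cos θ) ^ 2 := sq_nonneg _
    linarith
  have stepF : (∫ θ in Set.Ioo (-π) π, if 0 < Real.cos θ then E θ else 0)
      = 2 * ∫ θ in (0:ℝ)..(π/2), E θ := by
    have h1 : (∫ θ in Set.Ioo (-π) π, if 0 < Real.cos θ then E θ else 0)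
        = ∫ θ in Set.Ioo (-π) π, (Set.Ioo (-(π/2)) (π/2)).indicator E θ := by
      apply MeasureTheory.setIntegral_congr_fun measurableSet_Ioo
      intro θ hθ
      dsimp only
      rw [Set.indicator_apply]
      by_cases h : θ ∈ Set.Ioo (-(π/2)) (π/2)
      · rw [if_pos (Real.cos_pos_of_mem_Ioo h), if_pos h]
      · rw [if_neg h, if_neg]
        push_neg
        simp only [Set.mem_Ioo, not_and_or, not_lt] at h
        rcases h with h | h
        · have : Real.cos (-θ) ≤ 0 :=
            Real.cos_nonpos_of_pi_div_two_le_of_le (by linarith) (by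
              have := hθ.1; linarith [Real.pi_pos])
          rwa [Real.cos_neg] at this
        · exact Real.cos_nonpos_of_pi_div_two_le_of_le h (by
            have := hθ.2; linarith [Real.pi_pos])
    rw [h1, MeasureTheory.setIntegral_indicator measurableSet_Ioo, Set.Ioo_inter_Ioo]
    have hmax : max (-π) (-(π/2)) = -(π/2) := by
      apply max_eq_right; linarith [Real.pi_pos]
    have hmin : min π (π/2) = π/2 := by
      apply min_eq_right; linarith [Real.pi_pos]
    rw [hmax, hmin, ← MeasureTheory.integral_Ioc_eq_integral_Ioo,
      ← intervalIntegral.integral_of_le (by linarith [Real.pi_pos])]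
    have hsplit : ∫ θ in (-(π/2))..(π/2), E θ
        = (∫ θ in (-(π/2))..(0:ℝ), E θ) + ∫ θ in (0:ℝ)..(π/2), E θ :=
      (intervalIntegral.integral_add_adjacent_intervals (hEint _ _) (hEint _ _)).symm
    have hneg : (∫ θ in (-(π/2))..(0:ℝ), E θ) = ∫ θ in (0:ℝ)..(π/2), E θ := by
      have := intervalIntegral.integral_comp_neg (a := (0:ℝ)) (b := π/2) E
      rw [neg_zero] at this
      rw [← this]
      apply intervalIntegral.integral_congr
      intro θ _
      simp only [hE, Real.cos_neg]
    rw [hsplit, hneg]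
    ring
  -- substitution cos → sin
  have stepG : (∫ θ in (0:ℝ)..(π/2), E θ)
      = ∫ θ in Set.Ioc 0 (π/2), rexp (-(x / Real.sin θ) ^ 2 / 2) := by
    have := intervalIntegral.integral_comp_sub_left (a := (0:ℝ)) (b := π/2) E (π/2)
    rw [sub_self, sub_zero] at this
    rw [← this, ← intervalIntegral.integral_of_le (by linarith [Real.pi_pos] : (0:ℝ) ≤ π/2)]
    apply intervalIntegral.integral_congr
    intro θ _
    simp only [hE, Real.cos_pi_div_two_sub]
  -- assemble
  have key : J * √(2 * π)
      = 2 * ∫ θ in Set.Ioc 0 (π/2), rexp (-(x / Real.sin θ) ^ 2 / 2) := by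
    rw [← stepG, ← stepF]
    rw [← stepA, ← _root_.integral_comp_polarCoord_symm F]
    simp_rw [stepC]
    rw [stepD]
    simp only [stepE]
  -- final arithmetic
  set I : ℝ := ∫ θ in Set.Ioc 0 (π/2), rexp (-(x / Real.sin θ) ^ 2 / 2) with hI2
  have h2π : (0:ℝ) < √(2 * π) := by positivity
  have hππ : √(2 * π) * √(2 * π) = 2 * π := Real.mul_self_sqrt (by positivity)
  show (√(2 * π))⁻¹ * J = (1/π) * I
  have hπ : Real.pi ≠ 0 := Real.pi_ne_zero
  field_simp
  linear_combination (√(2 * π)/2) * key + (-J/2) * hππ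

lemma craig' {x : ℝ} (hx : 0 ≤ x) :
    gaussQ x = (1/π) * ∫ θ in Set.Ioc 0 (π/2), rexp (-(x / Real.sin θ) ^ 2 / 2) := by
  rcases hx.lt_or_eq with h | h
  · exact craig h
  · subst h
    have h1 : ∀ θ : ℝ, rexp (-((0:ℝ) / Real.sin θ) ^ 2 / 2) = 1 := by
      intro θ; simp
    simp_rw [h1]
    rw [MeasureTheory.setIntegral_const, Real.volume_real_Ioc, smul_eq_mul, mul_one,
      max_eq_left (by linarith [Real.pi_pos])]
    have h2 : (fun u : ℝ => Real.exp (-u ^ 2 / 2)) = fun u : ℝ => rexp (-(1/2 : ℝ) * u ^ 2) := by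
      funext u; congr 1; ring
    rw [gaussQ, h2, integral_gaussian_Ioi, show π / (1/2:ℝ) = 2 * π from by ring]
    have h3 : √(2 * π) ≠ 0 := by positivity
    have hπ : Real.pi ≠ 0 := Real.pi_ne_zero
    field_simp
    ring

open scoped NNReal ENNReal in
lemma one_dim (c : ℝ) (hc : 0 ≤ c) :
    ∫ x : ℝ, rexp (-(c * x ^ 2) / 2) ∂(gaussianReal 0 1) = (1 + c) ^ (-(1:ℝ) / 2) := by
  have h1c : (0:ℝ) < 1 + c := by linarith
  rw [gaussianReal_of_var_ne_zero 0 one_ne_zero]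
  have hd : (gaussianPDF 0 1) = fun x => ((Real.toNNReal (gaussianPDFReal 0 1 x) : ℝ≥0) : ℝ≥0∞) := by
    funext x
    simp [gaussianPDF, ENNReal.ofReal]
  rw [hd, integral_withDensity_eq_integral_smul
    ((measurable_gaussianPDFReal 0 1).real_toNNReal)]
  have h1 : ∀ x : ℝ, (Real.toNNReal (gaussianPDFReal 0 1 x)) • rexp (-(c * x ^ 2) / 2)
      = (√(2 * π))⁻¹ * rexp (-((1 + c) / 2) * x ^ 2) := by
    intro x
    rw [NNReal.smul_def, smul_eq_mul, Real.coe_toNNReal _ (gaussianPDFReal_nonneg 0 1 x)]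
    simp only [gaussianPDFReal, NNReal.coe_one, mul_one, sub_zero]
    rw [mul_assoc, ← Real.exp_add]
    congr 2
    ring
  simp_rw [h1]
  rw [integral_const_mul, integral_gaussian]
  have h2 : √(π / ((1 + c) / 2)) = √(2 * π) / √(1 + c) := by
    rw [show π / ((1 + c) / 2) = 2 * π / (1 + c) by field_simp, Real.sqrt_div (by positivity)]
  rw [h2, neg_div, Real.rpow_neg h1c.le, ← Real.sqrt_eq_rpow]
  have h3 : √(2 * π) ≠ 0 := by positivity
  field_simp

lemma pi_dim (N : ℕ) (c : ℝ) (hc : 0 ≤ c) :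
    ∫ g : Fin N → ℝ, rexp (-(c * ∑ i, g i ^ 2) / 2)
      ∂(Measure.pi fun _ : Fin N => gaussianReal 0 1) = (1 + c) ^ (-(N:ℝ) / 2) := by
  have h1c : (0:ℝ) < 1 + c := by linarith
  have h1 : ∀ g : Fin N → ℝ, rexp (-(c * ∑ i, g i ^ 2) / 2)
      = ∏ i, rexp (-(c * g i ^ 2) / 2) := by
    intro g
    rw [← Real.exp_sum]
    congr 1
    rw [Finset.mul_sum, ← Finset.sum_neg_distrib, Finset.sum_div]
  simp_rw [h1]
  letI : MeasureSpace ℝ := ⟨gaussianReal 0 1⟩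
  haveI : SigmaFinite (volume : Measure ℝ) := by
    show SigmaFinite (gaussianReal 0 1); infer_instance
  have h2 := MeasureTheory.integral_fintype_prod_eq_pow (𝕜 := ℝ) (ι := Fin N) (μ := (volume : Measure ℝ))
    (fun x : ℝ => rexp (-(c * x ^ 2) / 2))
  rw [show (Measure.pi fun _ : Fin N => gaussianReal 0 1) = (volume : Measure (Fin N → ℝ)) from rfl]
  rw [← MeasureTheory.volume_pi] at h2
  rw [h2]
  rw [show (volume : Measure ℝ) = gaussianReal 0 1 from rfl, one_dim c hc,
    ← Real.rpow_natCast ((1 + c) ^ (-(1:ℝ)/2)) (Fintype.card (Fin N)),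
    ← Real.rpow_mul h1c.le]
  congr 1
  simp
  ring

/-- Averaging the Q-function of `a‖g‖` over a standard Gaussian vector `g` gives a
Craig-type single-integral representation. -/
theorem gaussian_avg_Q_eq (N : ℕ) (a : ℝ) (ha : 0 < a) :
    ∫ g : Fin N → ℝ, gaussQ (a * Real.sqrt (∑ i, g i ^ 2))
        ∂(Measure.pi fun _ : Fin N => gaussianReal 0 1) =
      (1 / Real.pi) * ∫ θ in Set.Icc (0 : ℝ) (Real.pi / 2),
        if θ = 0 then 0 else ((1 + a ^ 2 / Real.sin θ ^ 2) ^ (-(N : ℝ) / 2)) := by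
  set μ : Measure (Fin N → ℝ) := Measure.pi fun _ : Fin N => gaussianReal 0 1 with hμ
  have hstep1 : ∀ g : Fin N → ℝ, gaussQ (a * Real.sqrt (∑ i, g i ^ 2))
      = (1/π) * ∫ θ in Set.Ioc 0 (π/2),
          rexp (-((a ^ 2 / Real.sin θ ^ 2) * ∑ i, g i ^ 2) / 2) := by
    intro g
    have hS : (0:ℝ) ≤ ∑ i, g i ^ 2 := Finset.sum_nonneg fun i _ => sq_nonneg _
    have hsq : Real.sqrt (∑ i, g i ^ 2) ^ 2 = ∑ i, g i ^ 2 := Real.sq_sqrt hS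
    have hfun : (fun θ : ℝ => rexp (-((a * Real.sqrt (∑ i, g i ^ 2)) / Real.sin θ) ^ 2 / 2))
        = fun θ : ℝ => rexp (-((a ^ 2 / Real.sin θ ^ 2) * ∑ i, g i ^ 2) / 2) := by
      funext θ
      congr 1
      linear_combination (-(a^2) / (Real.sin θ ^ 2 * 2)) * hsq
    rw [craig' (by positivity), hfun]
  simp_rw [hstep1]
  rw [MeasureTheory.integral_const_mul]
  -- Fubini
  haveI : IsFiniteMeasure (volume.restrict (Set.Ioc (0:ℝ) (π/2))) :=
    ⟨by rw [Measure.restrict_apply_univ]; exact measure_Ioc_lt_top⟩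
  have hswap : ∫ g, (∫ θ in Set.Ioc 0 (π/2),
        rexp (-((a ^ 2 / Real.sin θ ^ 2) * ∑ i, g i ^ 2) / 2)) ∂μ
      = ∫ θ in Set.Ioc 0 (π/2), ∫ g,
        rexp (-((a ^ 2 / Real.sin θ ^ 2) * ∑ i, g i ^ 2) / 2) ∂μ := by
    apply MeasureTheory.integral_integral_swap
    have hmeas : Measurable (fun p : (Fin N → ℝ) × ℝ =>
        rexp (-((a ^ 2 / Real.sin p.2 ^ 2) * ∑ i, p.1 i ^ 2) / 2)) := by
      apply Real.measurable_exp.comp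
      apply Measurable.div_const
      apply Measurable.neg
      apply Measurable.mul
      · exact (measurable_const.div
          (((Real.continuous_sin.measurable).comp measurable_snd).pow_const 2))
      · exact Finset.measurable_sum Finset.univ
          (fun i _ => ((measurable_pi_apply i).comp measurable_fst).pow_const 2)
    apply Integrable.mono' (integrable_const (1:ℝ)) hmeas.aestronglyMeasurable
    apply Filter.Eventually.of_forall
    rintro ⟨g, θ⟩
    simp only [Function.uncurry]
    rw [Real.norm_eq_abs, Real.abs_exp]
    have h1 : (0:ℝ) ≤ (a ^ 2 / Real.sin θ ^ 2) * ∑ i, g i ^ 2 :=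
      mul_nonneg (div_nonneg (sq_nonneg _) (sq_nonneg _))
        (Finset.sum_nonneg fun i _ => sq_nonneg _)
    calc rexp (-((a ^ 2 / Real.sin θ ^ 2) * ∑ i, g i ^ 2) / 2) ≤ rexp 0 :=
      Real.exp_le_exp.2 (by linarith)
    _ = 1 := Real.exp_zero
  rw [hswap]
  have hinner : ∀ θ : ℝ, (∫ g, rexp (-((a ^ 2 / Real.sin θ ^ 2) * ∑ i, g i ^ 2) / 2) ∂μ)
      = (1 + a ^ 2 / Real.sin θ ^ 2) ^ (-(N:ℝ) / 2) :=
    fun θ => pi_dim N _ (div_nonneg (sq_nonneg _) (sq_nonneg _))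
  simp_rw [hinner]
  congr 1
  rw [MeasureTheory.integral_Icc_eq_integral_Ioc]
  apply MeasureTheory.setIntegral_congr_fun measurableSet_Ioc
  intro θ hθ
  dsimp only
  rw [if_neg (ne_of_gt hθ.1)]
end

section
/- Let μ be the standard Gaussian measure on ℝ^N (the product of N copies of the real Gaussian distribution with mean 0 and variance 1). Then for every real a > 0, ∫ Q(a‖g‖) dμ(g) ≤ (1/2) · (1 + a²)^{-N/2}. -/
open Real MeasureTheory ProbabilityTheory

lemma integrable_exp_neg_sq_half : Integrable (fun u : ℝ => Real.exp (-u ^ 2 / 2)) := by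
  have := integrable_exp_neg_mul_sq (show (0:ℝ) < 1/2 by norm_num)
  convert this using 2 with u
  ring_nf

lemma gaussQ_nonneg (x : ℝ) : 0 ≤ gaussQ x :=
  mul_nonneg (inv_nonneg.2 (Real.sqrt_nonneg _)) (integral_nonneg fun _ => (Real.exp_pos _).le)

lemma gaussQ_le (x : ℝ) (hx : 0 ≤ x) : gaussQ x ≤ (1/2) * Real.exp (-x ^ 2 / 2) := by
  have hshift : Integrable (fun u : ℝ => Real.exp (-(u - x) ^ 2 / 2)) :=
    integrable_exp_neg_sq_half.comp_sub_right x
  have key : (∫ u in Set.Ioi x, Real.exp (-u ^ 2 / 2)) ≤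
      ∫ u in Set.Ioi x, Real.exp (-x ^ 2 / 2) * Real.exp (-(u - x) ^ 2 / 2) := by
    apply setIntegral_mono_on integrable_exp_neg_sq_half.integrableOn
      ((hshift.const_mul _).integrableOn) measurableSet_Ioi
    intro u hu
    rw [← Real.exp_add]
    apply Real.exp_le_exp.2
    have : x ≤ u := le_of_lt hu
    nlinarith
  have htrans : (∫ u in Set.Ioi x, Real.exp (-(u - x) ^ 2 / 2)) =
      ∫ v in Set.Ioi (0:ℝ), Real.exp (-v ^ 2 / 2) := by
    have hmp : MeasurePreserving (fun v : ℝ => v + x) volume volume :=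
      measurePreserving_add_right volume x
    have := hmp.setIntegral_preimage_emb (measurableEmbedding_addRight x)
      (fun u => Real.exp (-(u - x) ^ 2 / 2)) (Set.Ioi x)
    simpa using this.symm
  have hIoi : (∫ v in Set.Ioi (0:ℝ), Real.exp (-v ^ 2 / 2)) = Real.sqrt (2 * Real.pi) / 2 := by
    have := integral_gaussian_Ioi (1/2)
    have h2 : (fun v : ℝ => Real.exp (-v ^ 2 / 2)) = fun v : ℝ => Real.exp (-(1/2) * v ^ 2) := by
      funext v; ring_nf
    rw [h2, this]
    norm_num [mul_comm]
  have hsqrt : (0:ℝ) < Real.sqrt (2 * Real.pi) := Real.sqrt_pos.2 (by positivity)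
  calc gaussQ x ≤ (Real.sqrt (2 * Real.pi))⁻¹ *
        ∫ u in Set.Ioi x, Real.exp (-x ^ 2 / 2) * Real.exp (-(u - x) ^ 2 / 2) := by
        exact mul_le_mul_of_nonneg_left key (inv_nonneg.2 hsqrt.le)
    _ = (Real.sqrt (2 * Real.pi))⁻¹ * (Real.exp (-x ^ 2 / 2) * (Real.sqrt (2 * Real.pi) / 2)) := by
        rw [integral_const_mul, htrans, hIoi]
    _ = (1/2) * Real.exp (-x ^ 2 / 2) := by
        field_simp

lemma integral_exp_gaussian_one_dim (c : ℝ) (hc : 0 < c) :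
    ∫ x : ℝ, Real.exp (-c * x ^ 2) ∂(gaussianReal 0 1) = (Real.sqrt (1 + 2 * c))⁻¹ := by
  rw [gaussianReal_of_var_ne_zero 0 one_ne_zero]
  have hpdf : gaussianPDF 0 1 = fun x => ((gaussianPDFReal 0 1 x).toNNReal : ENNReal) := rfl
  rw [hpdf, integral_withDensity_eq_integral_smul
    ((measurable_gaussianPDFReal 0 1).real_toNNReal)]
  have : ∀ x : ℝ, (Real.toNNReal (gaussianPDFReal 0 1 x)) • Real.exp (-c * x ^ 2) =
      (Real.sqrt (2 * Real.pi))⁻¹ * Real.exp (-(c + 1/2) * x ^ 2) := by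
    intro x
    rw [NNReal.smul_def, Real.coe_toNNReal _ (gaussianPDFReal_nonneg 0 1 x), gaussianPDFReal,
      smul_eq_mul, mul_assoc, ← Real.exp_add]
    simp only [NNReal.coe_one, mul_one, sub_zero]
    congr 2
    ring
  simp_rw [this]
  rw [integral_const_mul, integral_gaussian]
  rw [← Real.sqrt_inv, ← Real.sqrt_mul (by positivity)]
  have hpi : (0:ℝ) < Real.pi := Real.pi_pos
  congr 1
  field_simp
  ring_nf
  rw [Real.sqrt_inv, inv_mul_cancel₀ (Real.sqrt_pos.2 (by linarith)).ne']

lemma integral_pi_prod_pow (ν : Measure ℝ) [SigmaFinite ν] (f : ℝ → ℝ) (n : ℕ) :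
    ∫ x : Fin n → ℝ, ∏ i, f (x i) ∂(Measure.pi fun _ => ν) = (∫ x, f x ∂ν) ^ n := by
  induction n with
  | zero =>
      simp only [Finset.univ_eq_empty, Finset.prod_empty, integral_const,
        measureReal_def, Measure.pi_empty_univ, ENNReal.toReal_one, smul_eq_mul, mul_one, pow_zero, one_smul]
  | succ n ih =>
      calc ∫ x : Fin (n+1) → ℝ, ∏ i, f (x i) ∂(Measure.pi fun _ => ν)
          = ∫ p : ℝ × (Fin n → ℝ), f p.1 * ∏ i : Fin n, f (p.2 i)
              ∂(ν.prod (Measure.pi fun _ => ν)) := by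
            rw [← ((measurePreserving_piFinSuccAbove (fun _ : Fin (n+1) => ν)
              0).symm).integral_comp']
            refine integral_congr_ae (Filter.Eventually.of_forall fun p => ?_)
            simp [MeasurableEquiv.piFinSuccAbove_symm_apply, Fin.prod_univ_succ,
              Fin.zero_succAbove, Fin.insertNthEquiv, Fin.insertNth_zero]
        _ = (∫ x, f x ∂ν) * ∫ x : Fin n → ℝ, ∏ i, f (x i) ∂(Measure.pi fun _ => ν) := by
            exact integral_prod_mul f (fun y : Fin n → ℝ => ∏ i, f (y i))
        _ = (∫ x, f x ∂ν) ^ (n+1) := by rw [ih]; ring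

/-- Upper bound on the Gaussian average of `Q(a‖g‖)`:
`∫ Q(a‖g‖) dμ ≤ (1/2)(1 + a²)^{-N/2}`. -/
theorem gaussian_avg_Q_le (N : ℕ) (a : ℝ) (ha : 0 < a) :
    ∫ g : Fin N → ℝ, gaussQ (a * Real.sqrt (∑ i, g i ^ 2))
        ∂(Measure.pi fun _ : Fin N => gaussianReal 0 1) ≤
      (1 / 2) * (1 + a ^ 2) ^ (-(N : ℝ) / 2) := by
  have hbound : ∀ g : Fin N → ℝ, gaussQ (a * Real.sqrt (∑ i, g i ^ 2)) ≤
      (1/2) * Real.exp (-(a ^ 2 * ∑ i, g i ^ 2) / 2) := by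
    intro g
    have hs : (0:ℝ) ≤ ∑ i, g i ^ 2 := Finset.sum_nonneg fun i _ => sq_nonneg _
    have := gaussQ_le (a * Real.sqrt (∑ i, g i ^ 2))
      (mul_nonneg ha.le (Real.sqrt_nonneg _))
    rwa [mul_pow, Real.sq_sqrt hs] at this
  have hmeas : Measurable fun g : Fin N → ℝ =>
      (1/2) * Real.exp (-(a ^ 2 * ∑ i, g i ^ 2) / 2) := by
    apply Measurable.const_mul
    apply Real.measurable_exp.comp
    apply Measurable.div_const
    apply Measurable.neg
    exact (Finset.measurable_sum _ fun i _ => ((measurable_pi_apply i).pow_const 2)).const_mul _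
  have hint : Integrable (fun g : Fin N → ℝ =>
      (1/2) * Real.exp (-(a ^ 2 * ∑ i, g i ^ 2) / 2)) (Measure.pi fun _ : Fin N => gaussianReal 0 1) := by
    apply Integrable.mono' (integrable_const (1/2 : ℝ)) hmeas.aestronglyMeasurable
    filter_upwards with g
    rw [Real.norm_eq_abs, abs_of_nonneg (by positivity)]
    have hs : (0:ℝ) ≤ ∑ i, g i ^ 2 := Finset.sum_nonneg fun i _ => sq_nonneg _
    have : Real.exp (-(a ^ 2 * ∑ i, g i ^ 2) / 2) ≤ 1 := by
      rw [← Real.exp_zero]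
      apply Real.exp_le_exp.2
      have : (0:ℝ) ≤ a ^ 2 * ∑ i, g i ^ 2 := by positivity
      linarith
    linarith
  have step1 : ∫ g : Fin N → ℝ, gaussQ (a * Real.sqrt (∑ i, g i ^ 2)) ∂(Measure.pi fun _ : Fin N => gaussianReal 0 1) ≤
      ∫ g : Fin N → ℝ, (1/2) * Real.exp (-(a ^ 2 * ∑ i, g i ^ 2) / 2) ∂(Measure.pi fun _ : Fin N => gaussianReal 0 1) := by
    apply integral_mono_of_nonneg
    · filter_upwards with g using gaussQ_nonneg _
    · exact hint
    · filter_upwards with g using hbound g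
  have step2 : ∫ g : Fin N → ℝ, (1/2) * Real.exp (-(a ^ 2 * ∑ i, g i ^ 2) / 2) ∂(Measure.pi fun _ : Fin N => gaussianReal 0 1) =
      (1/2) * ((Real.sqrt (1 + a ^ 2))⁻¹) ^ N := by
    rw [integral_const_mul]
    congr 1
    have hprod : ∀ g : Fin N → ℝ, Real.exp (-(a ^ 2 * ∑ i, g i ^ 2) / 2) =
        ∏ i, Real.exp (-(a ^ 2 / 2) * (g i) ^ 2) := by
      intro g
      rw [← Real.exp_sum]
      congr 1
      simp_rw [neg_mul]
      rw [Finset.sum_neg_distrib, ← Finset.mul_sum]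
      ring
    simp_rw [hprod]
    rw [integral_pi_prod_pow (gaussianReal 0 1) (fun x : ℝ => Real.exp (-(a ^ 2 / 2) * x ^ 2)) N,
      integral_exp_gaussian_one_dim (a ^ 2 / 2) (by positivity)]
    rw [inv_pow, inv_pow]
    congr 3
    ring
  rw [step2] at step1
  refine step1.trans (le_of_eq ?_)
  congr 1
  have h1 : (0:ℝ) ≤ 1 + a ^ 2 := by positivity
  rw [Real.sqrt_eq_rpow, ← Real.rpow_neg h1, ← Real.rpow_natCast ((1 + a^2) ^ (-(1/2):ℝ)) N,
    ← Real.rpow_mul h1]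
  congr 1
  ring
end
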